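/- For δ a complex number with (1+δ)^{3n} = -1, n ≥ 3, α ∈ C*, β ∈ C, the projective matrix φ = [[1, 2β/α, -(1+δ+δ²)/α],[0,-1,0],[α,β,δ]] satisfies: the point P = (1:0:0) is a fixed point of (φ∘Φ_n)²∘φ, where Φ_n(x:y:z) = (x z^{n-1}+y^n : y z^{n-1} : z^n). -/

import Mathlib

/-- For `δ ∈ ℂ` with `(1+δ)^(3n) = -1`, `n ≥ 3`, `α ∈ ℂ*`, `β ∈ ℂ`, the projective matrix
`φ = [[1, 2β/α, -(1+δ+δ²)/α],[0,-1,0],[α,β,δ]]` satisfies: the point `P = (1:0:0)` is a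
fixed point of `(φ ∘ Φ_n)² ∘ φ`, where `Φ_n(x:y:z) = (x z^(n-1)+y^n : y z^(n-1) : z^n)`.
In homogeneous coordinates: `((φΦ_n)²φ)(1,0,0)` is a nonzero scalar multiple of `(1,0,0)`. -/
theorem stmt13 (n : ℕ) (hn : 3 ≤ n) (α β δ : ℂ) (hα : α ≠ 0)
    (hδ : (1 + δ) ^ (3 * n) = -1)
    (Φ : ℂ × ℂ × ℂ → ℂ × ℂ × ℂ)
    (hΦ : Φ = fun v => (v.1 * v.2.2 ^ (n - 1) + v.2.1 ^ n, v.2.1 * v.2.2 ^ (n - 1), v.2.2 ^ n))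
    (φ : ℂ × ℂ × ℂ → ℂ × ℂ × ℂ)
    (hφ : φ = fun v => (v.1 + (2 * β / α) * v.2.1 - ((1 + δ + δ ^ 2) / α) * v.2.2,
      -v.2.1, α * v.1 + β * v.2.1 + δ * v.2.2)) :
    ∃ c : ℂ, c ≠ 0 ∧ φ (Φ (φ (Φ (φ (1, 0, 0))))) = (c, 0, 0) := by
  have h1 : (1 : ℂ) + δ ≠ 0 := by
    intro h
    rw [h, zero_pow (by omega)] at hδ
    exact one_ne_zero (neg_eq_zero.mp hδ.symm)
  subst hΦ hφ
  obtain ⟨m, rfl⟩ : ∃ m, n = m + 3 := ⟨n - 3, by omega⟩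
  refine ⟨-(α ^ (m * m + 6 * m + 8) * (1 + δ) ^ (m + 5)),
    neg_ne_zero.mpr (mul_ne_zero (pow_ne_zero _ hα) (pow_ne_zero _ h1)), ?_⟩
  simp only [Prod.mk.injEq]
  have key : (α ^ 3 * α ^ m + α ^ 3 * α ^ m * δ) = α ^ (m + 3) * (1 + δ) := by ring
  rw [show m + 3 - 1 = m + 2 from rfl]
  refine ⟨?_, by ring, ?_⟩ <;> field_simp <;> ring_nf <;> rw [key, mul_pow] <;> ring
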